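/- Let m, n, N be integers and let G = (ℂ \ {0}) × ℂ × ℂ with the product (a,u,v)(a',u',v') = (aa', u + a^{nN} u', v + a^{mN} v'). Then K₁ = {(a,u,0) : a ∈ ℂ\{0}, u ∈ ℂ} and K₂ = {(b, 0, b^{mN} − 1) : b ∈ ℂ\{0}} are subgroups of G, and K₁ ∩ K₂ = {(b, 0, 0) : b ∈ ℂ\{0}, b^{mN} = 1}. In particular, if mN ∉ {1, −1} then K₁ ∩ K₂ ≠ {(1,0,0)}. -/

import Mathlib

lemma exists_root_ne_one (k : ℤ) (h1 : k ≠ 1) (h2 : k ≠ -1) :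
    ∃ b : ℂ, b ≠ 0 ∧ b ≠ 1 ∧ b ^ k = 1 := by
  rcases eq_or_ne k 0 with rfl | hk0
  · exact ⟨2, by norm_num, by norm_num, by simp⟩
  · have hj : 2 ≤ k.natAbs := by omega
    have hjne : k.natAbs ≠ 0 := by omega
    obtain ⟨b, hprim⟩ : ∃ b : ℂ, IsPrimitiveRoot b k.natAbs :=
      ⟨_, Complex.isPrimitiveRoot_exp _ hjne⟩
    have hb1 : b ≠ 1 := by
      intro h
      have := hprim.pow_ne_one_of_pos_of_lt (l := 1) one_ne_zero hj
      simp [h] at this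
    have hbj : b ^ (k.natAbs : ℕ) = 1 := hprim.pow_eq_one
    have hb0 : b ≠ 0 := by
      intro h; rw [h, zero_pow hjne] at hbj; exact zero_ne_one hbj
    refine ⟨b, hb0, hb1, ?_⟩
    rcases Int.natAbs_eq k with hk | hk
    · rw [hk, zpow_natCast, hbj]
    · rw [hk, zpow_neg, zpow_natCast, hbj, inv_one]

theorem quotient_group_subgroups_intersection
    (m n N : ℤ)
    (mul : ℂ × ℂ × ℂ → ℂ × ℂ × ℂ → ℂ × ℂ × ℂ)
    (hmul : ∀ a u v a' u' v' : ℂ, mul (a, u, v) (a', u', v') =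
      (a * a', u + a ^ (n * N) * u', v + a ^ (m * N) * v'))
    (K1 K2 : Set (ℂ × ℂ × ℂ))
    (hK1 : K1 = {q | q.1 ≠ 0 ∧ q.2.2 = 0})
    (hK2 : K2 = {q | ∃ b : ℂ, b ≠ 0 ∧ q = (b, 0, b ^ (m * N) - 1)}) :
    ((1, 0, 0) ∈ K1 ∧ (∀ q ∈ K1, ∀ r ∈ K1, mul q r ∈ K1) ∧
      (∀ q ∈ K1, ∃ r ∈ K1, mul q r = (1, 0, 0) ∧ mul r q = (1, 0, 0))) ∧
    ((1, 0, 0) ∈ K2 ∧ (∀ q ∈ K2, ∀ r ∈ K2, mul q r ∈ K2) ∧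
      (∀ q ∈ K2, ∃ r ∈ K2, mul q r = (1, 0, 0) ∧ mul r q = (1, 0, 0))) ∧
    K1 ∩ K2 = {q | ∃ b : ℂ, b ≠ 0 ∧ b ^ (m * N) = 1 ∧ q = (b, 0, 0)} ∧
    (m * N ≠ 1 → m * N ≠ -1 → K1 ∩ K2 ≠ {((1 : ℂ), (0 : ℂ), (0 : ℂ))}) := by
  subst hK1 hK2
  refine ⟨⟨?_, ?_, ?_⟩, ⟨?_, ?_, ?_⟩, ?_, ?_⟩
  · exact ⟨one_ne_zero, rfl⟩
  · rintro ⟨a, u, v⟩ ⟨ha, hv⟩ ⟨a', u', v'⟩ ⟨ha', hv'⟩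
    simp only [Set.mem_setOf_eq] at hv hv' ⊢
    rw [hmul]
    exact ⟨mul_ne_zero ha ha', by simp [hv, hv']⟩
  · rintro ⟨a, u, v⟩ ⟨ha, hv⟩
    simp only [Set.mem_setOf_eq] at hv
    subst hv
    have ha : a ≠ 0 := ha
    have hz : a ^ (n * N) ≠ 0 := zpow_ne_zero _ ha
    refine ⟨(a⁻¹, -(a ^ (n * N))⁻¹ * u, 0), ⟨inv_ne_zero ha, rfl⟩, ?_, ?_⟩ <;>
      rw [hmul] <;>
      simp [mul_inv_cancel₀ ha, inv_mul_cancel₀ ha, inv_zpow, Prod.ext_iff] <;>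
      field_simp <;> ring
  · exact ⟨1, one_ne_zero, by simp⟩
  · rintro q ⟨b, hb, rfl⟩ r ⟨b', hb', rfl⟩
    refine ⟨b * b', mul_ne_zero hb hb', ?_⟩
    rw [hmul, mul_zpow]
    ring_nf
  · rintro q ⟨b, hb, rfl⟩
    have hz : b ^ (m * N) ≠ 0 := zpow_ne_zero _ hb
    have hcancel : b ^ (m * N) * (b⁻¹) ^ (m * N) = 1 := by
      rw [inv_zpow, mul_inv_cancel₀ hz]
    refine ⟨(b⁻¹, 0, (b⁻¹) ^ (m * N) - 1), ⟨b⁻¹, inv_ne_zero hb, rfl⟩, ?_, ?_⟩ <;>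
      rw [hmul] <;>
      simp [mul_inv_cancel₀ hb, inv_mul_cancel₀ hb, inv_zpow, Prod.ext_iff] <;>
      field_simp <;> ring
  · ext ⟨a, u, v⟩
    simp only [Set.mem_inter_iff, Set.mem_setOf_eq]
    constructor
    · rintro ⟨⟨ha, hv⟩, b, hb, heq⟩
      simp only [Prod.mk.injEq] at heq
      obtain ⟨rfl, rfl, rfl⟩ := heq
      exact ⟨a, hb, sub_eq_zero.mp hv, by simp [Prod.ext_iff, hv]⟩
    · rintro ⟨b, hb, hb1, heq⟩
      simp only [Prod.mk.injEq] at heq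
      obtain ⟨rfl, rfl, rfl⟩ := heq
      exact ⟨⟨hb, rfl⟩, a, hb, by simp [Prod.mk.injEq, hb1]⟩
  · intro h1 h2 hEq
    obtain ⟨b, hb0, hb1, hbk⟩ := exists_root_ne_one (m * N) h1 h2
    have hmem : ((b, 0, b ^ (m * N) - 1) : ℂ × ℂ × ℂ) ∈
        ({q | q.1 ≠ 0 ∧ q.2.2 = 0} ∩
          {q | ∃ c : ℂ, c ≠ 0 ∧ q = (c, 0, c ^ (m * N) - 1)}) :=
      ⟨⟨hb0, by simp [hbk]⟩, b, hb0, rfl⟩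
    rw [hEq] at hmem
    simp only [Set.mem_singleton_iff, Prod.ext_iff] at hmem
    exact hb1 hmem.1
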